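/- arXiv:1507.00558 — 5 statements merged into one kernel-verified Lean document; each statement's English description precedes it below -/
import Mathlib

section
/- Let N ≥ 1 and let U, V be N×N unitary matrices. If |a* U b| = |a* V b| for all unit vectors a, b ∈ ℂ^N, then there exists λ ∈ ℂ with |λ| = 1 such that U = λ V. -/
open Matrix

lemma dp_zero {N : ℕ} (w : Fin N → ℂ) (h : star w ⬝ᵥ w = 0) : w = 0 := by
  have h2 : (∑ k, (Complex.normSq (w k) : ℂ)) = 0 := by
    simpa [dotProduct, Complex.normSq_eq_conj_mul_self] using h
  have h3 : (∑ k, Complex.normSq (w k)) = 0 := by exact_mod_cast h2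
  have h4 := (Finset.sum_eq_zero_iff_of_nonneg
    (fun k _ => Complex.normSq_nonneg (w k))).mp h3
  ext i
  exact Complex.normSq_eq_zero.mp (h4 i (Finset.mem_univ i))

lemma norm_pres {N : ℕ} (U : Matrix (Fin N) (Fin N) ℂ) (hU : Uᴴ * U = 1) (b : Fin N → ℂ)
    (hb : star b ⬝ᵥ b = 1) : star (U *ᵥ b) ⬝ᵥ (U *ᵥ b) = 1 := by
  rw [star_mulVec, dotProduct_mulVec, vecMul_vecMul, ← dotProduct_mulVec, hU, one_mulVec, hb]

lemma key {N : ℕ} (U V : Matrix (Fin N) (Fin N) ℂ)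
    (hU : Uᴴ * U = 1) (hV : Vᴴ * V = 1)
    (h : ∀ a b : Fin N → ℂ, star a ⬝ᵥ a = 1 → star b ⬝ᵥ b = 1 →
      ‖star a ⬝ᵥ U.mulVec b‖ = ‖star a ⬝ᵥ V.mulVec b‖)
    (b : Fin N → ℂ) (hb : star b ⬝ᵥ b = 1) :
    ∃ t : ℂ, ‖t‖ = 1 ∧ U *ᵥ b = t • (V *ᵥ b) := by
  set u := U *ᵥ b with hu
  set v := V *ᵥ b with hvv
  have huu : star u ⬝ᵥ u = 1 := norm_pres U hU b hb
  have hvvn : star v ⬝ᵥ v = 1 := norm_pres V hV b hb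
  have h1 : ‖star u ⬝ᵥ v‖ = 1 := by
    have := h u b huu hb
    rw [← hu, ← hvv, huu] at this
    simpa using this.symm
  set t := star u ⬝ᵥ v with ht
  have htt : t * star t = 1 := by
    have : t * (starRingEnd ℂ) t = Complex.normSq t := Complex.mul_conj t
    rw [Complex.normSq_eq_norm_sq, h1] at this
    simpa using this
  have hvu : star v ⬝ᵥ u = star t := by
    rw [ht]
    simp [dotProduct, Finset.mul_sum, mul_comm]
  have hw : v - t • u = 0 := by
    apply dp_zero
    have hstar : star (v - t • u) = star v - star t • star u := by
      ext i; simp [mul_comm]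
    rw [hstar, sub_dotProduct, dotProduct_sub, dotProduct_sub]
    simp only [smul_dotProduct, dotProduct_smul, smul_eq_mul]
    rw [hvvn, huu, hvu, ← ht]
    linear_combination -htt
  refine ⟨star t, by simpa using h1, ?_⟩
  have hv : v = t • u := by linear_combination (norm := module) hw
  rw [hv, smul_smul, mul_comm, htt, one_smul]

theorem stmt_0 {N : ℕ} (hN : 1 ≤ N) (U V : Matrix (Fin N) (Fin N) ℂ)
    (hU : Uᴴ * U = 1) (hV : Vᴴ * V = 1)
    (h : ∀ a b : Fin N → ℂ, star a ⬝ᵥ a = 1 → star b ⬝ᵥ b = 1 →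
      ‖star a ⬝ᵥ U.mulVec b‖ = ‖star a ⬝ᵥ V.mulVec b‖) :
    ∃ lam : ℂ, ‖lam‖ = 1 ∧ U = lam • V := by
  have hstar_single : ∀ i : Fin N, star (Pi.single i 1 : Fin N → ℂ) = Pi.single i 1 := by
    intro i; ext k; simp [Pi.single_apply, apply_ite (starRingEnd ℂ)]
  have hsingle : ∀ i : Fin N, star (Pi.single i 1 : Fin N → ℂ) ⬝ᵥ Pi.single i 1 = 1 := by
    intro i
    rw [hstar_single, single_dotProduct]
    simp
  choose t habs hcol using fun i : Fin N =>
    key U V hU hV h (Pi.single i 1) (hsingle i)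
  have hconst : ∀ i j : Fin N, t i = t j := by
    intro i j
    rcases eq_or_ne i j with rfl | hij
    · rfl
    set c : ℂ := ((Real.sqrt 2 : ℝ) : ℂ)⁻¹ with hc
    have hc0 : c ≠ 0 := by
      rw [hc]
      simp [Real.sqrt_eq_zero']
    have hmul : ((Real.sqrt 2 : ℝ) : ℂ) * ((Real.sqrt 2 : ℝ) : ℂ) = 2 := by
      norm_cast
      rw [Real.mul_self_sqrt (by norm_num)]
    have hc2 : c * c = 2⁻¹ := by rw [hc, ← mul_inv, hmul]
    set a : Fin N → ℂ := c • (Pi.single i 1 + Pi.single j 1) with ha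
    have hdp : (Pi.single i 1 + Pi.single j 1 : Fin N → ℂ) ⬝ᵥ
        (Pi.single i 1 + Pi.single j 1) = 2 := by
      rw [add_dotProduct, single_dotProduct, single_dotProduct]
      simp [Pi.single_apply, hij, hij.symm]
      ring
    have hsk : star a = c • (Pi.single i 1 + Pi.single j 1 : Fin N → ℂ) := by
      ext k
      simp [ha, hc, Pi.single_apply, apply_ite (starRingEnd ℂ)]
      split_ifs <;> ring
    have hau : star a ⬝ᵥ a = 1 := by
      rw [hsk, ha, smul_dotProduct, dotProduct_smul, hdp]
      simp only [smul_eq_mul]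
      rw [← mul_assoc, hc2]
      norm_num
    obtain ⟨s, hs, hcols⟩ := key U V hU hV h a hau
    have hUa : U *ᵥ a = c • (t i • (V *ᵥ Pi.single i 1) + t j • (V *ᵥ Pi.single j 1)) := by
      rw [ha, mulVec_smul, mulVec_add, hcol i, hcol j]
    have hVa : V *ᵥ a = c • ((V *ᵥ Pi.single i 1) + (V *ᵥ Pi.single j 1)) := by
      rw [ha, mulVec_smul, mulVec_add]
    rw [hUa, hVa, smul_comm s c] at hcols
    have hX := smul_right_injective (Fin N → ℂ) hc0 hcols
    have hY := congrArg (fun x => Vᴴ *ᵥ x) hX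
    simp only [mulVec_add, mulVec_smul, mulVec_mulVec, hV, one_mulVec] at hY
    have hi := congrFun hY i
    have hj := congrFun hY j
    simp [Pi.single_apply, hij, hij.symm] at hi hj
    rw [hi, hj]
  refine ⟨t ⟨0, hN⟩, habs _, ?_⟩
  ext k l
  have := congrFun (hcol l) k
  simp only [mulVec_single, op_smul_eq_mul, col_apply, Pi.smul_apply, smul_eq_mul, mul_one] at this
  rw [Matrix.smul_apply, smul_eq_mul, ← hconst l ⟨0, hN⟩, ← this]
end

section
/- Let U, V ∈ U(2) be 2×2 unitary matrices and e₁, e₂ the standard basis of ℂ². Then |a* U e₁| = |a* V e₁| for both a ∈ {e₁, e₂} if and only if there exist real angles α, β, θ such that V = e^{iθ} · diag(e^{iα}, e^{-iα}) · U · diag(e^{iβ}, e^{-iβ}). -/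
open Complex

lemma exp_arg_of_abs_one {z : ℂ} (hz : ‖z‖ = 1) : Complex.exp (z.arg * I) = z := by
  have := Complex.norm_mul_exp_arg_mul_I z
  rwa [hz, Complex.ofReal_one, one_mul] at this

lemma exp_half_sq {z : ℂ} (hz : ‖z‖ = 1) :
    Complex.exp (((z.arg / 2 : ℝ) : ℂ) * Complex.I) ^ 2 = z := by
  rw [sq, ← Complex.exp_add]
  have h : ((z.arg / 2 : ℝ) : ℂ) * I + ((z.arg / 2 : ℝ) : ℂ) * I = (z.arg : ℂ) * I := by
    push_cast; ring
  rw [h, exp_arg_of_abs_one hz]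

lemma key_s1 (a b c d a' b' c' d' : ℂ)
    (cU00 : (starRingEnd ℂ) a * a + (starRingEnd ℂ) b * b = 1)
    (cU01 : (starRingEnd ℂ) a * c + (starRingEnd ℂ) b * d = 0)
    (rU00 : a * (starRingEnd ℂ) a + c * (starRingEnd ℂ) c = 1)
    (rU01 : a * (starRingEnd ℂ) b + c * (starRingEnd ℂ) d = 0)
    (rU11 : b * (starRingEnd ℂ) b + d * (starRingEnd ℂ) d = 1)
    (cV01 : (starRingEnd ℂ) a' * c' + (starRingEnd ℂ) b' * d' = 0)
    (rV00 : a' * (starRingEnd ℂ) a' + c' * (starRingEnd ℂ) c' = 1)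
    (rV11 : b' * (starRingEnd ℂ) b' + d' * (starRingEnd ℂ) d' = 1)
    (h0 : ‖a'‖ = ‖a‖) (h1 : ‖b'‖ = ‖b‖) :
    ∃ α β θ : ℝ,
      a' = Complex.exp (θ * I) * (Complex.exp (α * I) * a * Complex.exp (β * I)) ∧
      b' = Complex.exp (θ * I) * (Complex.exp (-(α:ℂ) * I) * b * Complex.exp (β * I)) ∧
      c' = Complex.exp (θ * I) * (Complex.exp (α * I) * c * Complex.exp (-(β:ℂ) * I)) ∧
      d' = Complex.exp (θ * I) * (Complex.exp (-(α:ℂ) * I) * d * Complex.exp (-(β:ℂ) * I)) := by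
  have na : Complex.normSq a' = Complex.normSq a := by
    rw [← Complex.sq_norm, ← Complex.sq_norm a, h0]
  have nb : Complex.normSq b' = Complex.normSq b := by
    rw [← Complex.sq_norm, ← Complex.sq_norm b, h1]
  have hsum : Complex.normSq a + Complex.normSq c = 1 := by
    have : ((Complex.normSq a + Complex.normSq c : ℝ) : ℂ) = ((1:ℝ) : ℂ) := by
      push_cast; rw [← Complex.mul_conj, ← Complex.mul_conj]; exact rU00
    exact_mod_cast this
  have hsum' : Complex.normSq a' + Complex.normSq c' = 1 := by
    have : ((Complex.normSq a' + Complex.normSq c' : ℝ) : ℂ) = ((1:ℝ) : ℂ) := by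
      push_cast; rw [← Complex.mul_conj, ← Complex.mul_conj]; exact rV00
    exact_mod_cast this
  have hsumd : Complex.normSq b + Complex.normSq d = 1 := by
    have : ((Complex.normSq b + Complex.normSq d : ℝ) : ℂ) = ((1:ℝ) : ℂ) := by
      push_cast; rw [← Complex.mul_conj, ← Complex.mul_conj]; exact rU11
    exact_mod_cast this
  have hsumd' : Complex.normSq b' + Complex.normSq d' = 1 := by
    have : ((Complex.normSq b' + Complex.normSq d' : ℝ) : ℂ) = ((1:ℝ) : ℂ) := by
      push_cast; rw [← Complex.mul_conj, ← Complex.mul_conj]; exact rV11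
    exact_mod_cast this
  have nc : Complex.normSq c' = Complex.normSq c := by linarith
  have nd : Complex.normSq d' = Complex.normSq d := by linarith
  have h2 : ‖c'‖ = ‖c‖ := by
    rw [Complex.norm_def, Complex.norm_def, nc]
  have h3 : ‖d'‖ = ‖d‖ := by
    rw [Complex.norm_def, Complex.norm_def, nd]
  by_cases ha : a = 0
  · -- case a = 0
    have hb : b ≠ 0 := by
      intro hb; rw [ha, hb] at cU00; simp at cU00
    have ha' : a' = 0 := by
      rw [← Complex.normSq_eq_zero, na, Complex.normSq_eq_zero]; exact ha
    have hd : d = 0 := by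
      rw [ha] at cU01; simp at cU01
      rcases cU01 with h | h
      · exact absurd h hb
      · exact h
    have hd' : d' = 0 := by
      rw [← Complex.normSq_eq_zero, nd, Complex.normSq_eq_zero]; exact hd
    have hc : c ≠ 0 := by
      intro hc; rw [ha, hc] at rU00; simp at rU00
    have hc' : c' ≠ 0 := by
      intro h; apply hc
      rw [← Complex.normSq_eq_zero, ← nc, Complex.normSq_eq_zero]; exact h
    have hb' : b' ≠ 0 := by
      intro h; apply hb
      rw [← Complex.normSq_eq_zero, ← nb, Complex.normSq_eq_zero]; exact h
    have hvw : ‖b'/b / (c'/c)‖ = 1 := by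
      rw [norm_div, norm_div, norm_div, h1, h2,
        div_self (norm_ne_zero_iff.mpr hb), div_self (norm_ne_zero_iff.mpr hc)]
      norm_num
    set β : ℝ := (b'/b / (c'/c)).arg / 2 with hβdef
    have hβ2 : Complex.exp ((β:ℂ) * I) ^ 2 = b'/b / (c'/c) := exp_half_sq hvw
    set eβ := Complex.exp ((β:ℂ) * I) with heβ
    have heβne : eβ ≠ 0 := Complex.exp_ne_zero _
    have heβabs : ‖eβ‖ = 1 := Complex.norm_exp_ofReal_mul_I β
    have habsvβ : ‖b'/b / eβ‖ = 1 := by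
      rw [norm_div, norm_div, h1, div_self (norm_ne_zero_iff.mpr hb), heβabs]; norm_num
    set θ : ℝ := (b'/b / eβ).arg with hθdef
    have hθ : Complex.exp ((θ:ℂ) * I) = b'/b / eβ := exp_arg_of_abs_one habsvβ
    have hβ2' : eβ^2 * (b * c') = b' * c := by
      field_simp at hβ2
      linear_combination hβ2
    refine ⟨0, β, θ, ?_, ?_, ?_, ?_⟩
    · simp [ha, ha']
    · rw [hθ]; push_cast; rw [neg_zero, zero_mul, Complex.exp_zero]
      field_simp
      exact heβ
    · have hβneg : Complex.exp (-(β:ℂ) * I) = eβ⁻¹ := by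
        rw [heβ, ← Complex.exp_neg]; ring_nf
      rw [hθ, hβneg]; push_cast; rw [zero_mul, Complex.exp_zero]
      field_simp
      linear_combination hβ2'
    · simp [hd, hd']
  · by_cases hb : b = 0
    · -- case b = 0
      have hb' : b' = 0 := by
        rw [← Complex.normSq_eq_zero, nb, Complex.normSq_eq_zero]; exact hb
      have hd : d ≠ 0 := by
        intro hd; rw [hb, hd] at rU11; simp at rU11
      have hc : c = 0 := by
        rw [hb] at rU01; simp at rU01
        rcases rU01 with h | h
        · exact h
        · exact absurd h hd
      have hc' : c' = 0 := by
        rw [← Complex.normSq_eq_zero, nc, Complex.normSq_eq_zero]; exact hc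
      have ha' : a' ≠ 0 := by
        intro h; apply ha
        rw [← Complex.normSq_eq_zero, ← na, Complex.normSq_eq_zero]; exact h
      have hd' : d' ≠ 0 := by
        intro h; apply hd
        rw [← Complex.normSq_eq_zero, ← nd, Complex.normSq_eq_zero]; exact h
      have hux : ‖a'/a / (d'/d)‖ = 1 := by
        rw [norm_div, norm_div, norm_div, h0, h3,
          div_self (norm_ne_zero_iff.mpr ha), div_self (norm_ne_zero_iff.mpr hd)]
        norm_num
      set α : ℝ := (a'/a / (d'/d)).arg / 2 with hαdef
      have hα2 : Complex.exp ((α:ℂ) * I) ^ 2 = a'/a / (d'/d) := exp_half_sq hux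
      set eα := Complex.exp ((α:ℂ) * I) with heα
      have heαne : eα ≠ 0 := Complex.exp_ne_zero _
      have heαabs : ‖eα‖ = 1 := Complex.norm_exp_ofReal_mul_I α
      have habsuα : ‖a'/a / eα‖ = 1 := by
        rw [norm_div, norm_div, h0, div_self (norm_ne_zero_iff.mpr ha), heαabs]; norm_num
      set θ : ℝ := (a'/a / eα).arg with hθdef
      have hθ : Complex.exp ((θ:ℂ) * I) = a'/a / eα := exp_arg_of_abs_one habsuα
      have hα2' : eα^2 * (a * d') = a' * d := by
        field_simp at hα2
        linear_combination hα2
      refine ⟨α, 0, θ, ?_, ?_, ?_, ?_⟩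
      · rw [hθ]; push_cast; rw [zero_mul, Complex.exp_zero, ← heα]
        field_simp
      · simp [hb, hb']
      · simp [hc, hc']
      · have hαneg : Complex.exp (-(α:ℂ) * I) = eα⁻¹ := by
          rw [heα, ← Complex.exp_neg]; ring_nf
        rw [hθ, hαneg]; push_cast; rw [neg_zero, zero_mul, Complex.exp_zero]
        field_simp
        linear_combination hα2'
    · -- main case : a ≠ 0 and b ≠ 0
      have ha' : a' ≠ 0 := by
        intro h; apply ha
        rw [← Complex.normSq_eq_zero, ← na, Complex.normSq_eq_zero]; exact h
      have hb' : b' ≠ 0 := by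
        intro h; apply hb
        rw [← Complex.normSq_eq_zero, ← nb, Complex.normSq_eq_zero]; exact h
      have hcb : (starRingEnd ℂ) b ≠ 0 := by
        simpa using hb
      have hc : c ≠ 0 := by
        intro hc; rw [hc] at rU01; simp at rU01
        rcases rU01 with h | h
        · exact ha h
        · exact hb (by simpa using h)
      have hd : d ≠ 0 := by
        intro hd; rw [hd] at rU01; simp at rU01
        rcases rU01 with h | h
        · exact ha h
        · exact hb (by simpa using h)
      have hc' : c' ≠ 0 := by
        intro h; apply hc
        rw [← Complex.normSq_eq_zero, ← nc, Complex.normSq_eq_zero]; exact h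
      have hd' : d' ≠ 0 := by
        intro h; apply hd
        rw [← Complex.normSq_eq_zero, ← nd, Complex.normSq_eq_zero]; exact h
      -- key determinant-phase identity
      have hca : (starRingEnd ℂ) a' * a' = (starRingEnd ℂ) a * a := by
        rw [mul_comm, mul_comm ((starRingEnd ℂ) a) a, Complex.mul_conj, Complex.mul_conj,
          na]
      have hcbb : (starRingEnd ℂ) b' * b' = (starRingEnd ℂ) b * b := by
        rw [mul_comm, mul_comm ((starRingEnd ℂ) b) b, Complex.mul_conj, Complex.mul_conj,
          nb]
      have hkey0 : (starRingEnd ℂ) b * (a*d*c'*b') = (starRingEnd ℂ) b * (b*c*d'*a') := by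
        linear_combination (a*c'*b') * cU01 - (c*a'*b') * cV01 + (c*c'*b') * hca +
          (c*d'*a') * hcbb
      have hkey : a*d*c'*b' = b*c*d'*a' := mul_left_cancel₀ hcb hkey0
      have huv : ‖a'/a / (b'/b)‖ = 1 := by
        rw [norm_div, norm_div, norm_div, h0, h1,
          div_self (norm_ne_zero_iff.mpr ha), div_self (norm_ne_zero_iff.mpr hb)]
        norm_num
      have huw : ‖a'/a / (c'/c)‖ = 1 := by
        rw [norm_div, norm_div, norm_div, h0, h2,
          div_self (norm_ne_zero_iff.mpr ha), div_self (norm_ne_zero_iff.mpr hc)]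
        norm_num
      set α : ℝ := (a'/a / (b'/b)).arg / 2 with hαdef
      set β : ℝ := (a'/a / (c'/c)).arg / 2 with hβdef
      have hα2 : Complex.exp ((α:ℂ) * I) ^ 2 = a'/a / (b'/b) := exp_half_sq huv
      have hβ2 : Complex.exp ((β:ℂ) * I) ^ 2 = a'/a / (c'/c) := exp_half_sq huw
      set eα := Complex.exp ((α:ℂ) * I) with heα
      set eβ := Complex.exp ((β:ℂ) * I) with heβ
      have heαne : eα ≠ 0 := Complex.exp_ne_zero _
      have heβne : eβ ≠ 0 := Complex.exp_ne_zero _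
      have heαabs : ‖eα‖ = 1 := Complex.norm_exp_ofReal_mul_I α
      have heβabs : ‖eβ‖ = 1 := Complex.norm_exp_ofReal_mul_I β
      have habsθ : ‖a'/a / (eα * eβ)‖ = 1 := by
        rw [norm_div, norm_div, norm_mul, h0, div_self (norm_ne_zero_iff.mpr ha),
          heαabs, heβabs]
        norm_num
      set θ : ℝ := (a'/a / (eα * eβ)).arg with hθdef
      have hθ : Complex.exp ((θ:ℂ) * I) = a'/a / (eα * eβ) := exp_arg_of_abs_one habsθ
      have hα2' : eα^2 * (a * b') = a' * b := by
        field_simp at hα2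
        linear_combination hα2
      have hβ2' : eβ^2 * (a * c') = a' * c := by
        field_simp at hβ2
        linear_combination hβ2
      have hαneg : Complex.exp (-(α:ℂ) * I) = eα⁻¹ := by
        rw [heα, ← Complex.exp_neg]; ring_nf
      have hβneg : Complex.exp (-(β:ℂ) * I) = eβ⁻¹ := by
        rw [heβ, ← Complex.exp_neg]; ring_nf
      have h4 : d' * (a * eα^2 * eβ^2) = a' * d := by
        apply mul_left_cancel₀ (show a * b' * c' ≠ 0 by
          exact mul_ne_zero (mul_ne_zero ha hb') hc')
        linear_combination (eβ^2 * a * c' * d') * hα2' + (a' * b * d') * hβ2' - a' * hkey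
      refine ⟨α, β, θ, ?_, ?_, ?_, ?_⟩
      · rw [hθ, ← heα, ← heβ]; field_simp
      · rw [hθ, hαneg, ← heβ]; field_simp
        linear_combination hα2'
      · rw [hθ, hβneg, ← heα]; field_simp
        linear_combination hβ2'
      · rw [hθ, hαneg, hβneg]; field_simp
        linear_combination h4


open Matrix

theorem stmt_1 (U V : Matrix (Fin 2) (Fin 2) ℂ)
    (hU : Uᴴ * U = 1) (hV : Vᴴ * V = 1) :
    (∀ i : Fin 2,
        ‖star (Pi.single i 1 : Fin 2 → ℂ) ⬝ᵥ U.mulVec (Pi.single 0 1)‖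
          = ‖star (Pi.single i 1 : Fin 2 → ℂ) ⬝ᵥ V.mulVec (Pi.single 0 1)‖)
      ↔
    (∃ α β θ : ℝ,
      V = Complex.exp (θ * Complex.I) •
        (Matrix.diagonal ![Complex.exp (α * Complex.I), Complex.exp (-α * Complex.I)] * U *
          Matrix.diagonal ![Complex.exp (β * Complex.I), Complex.exp (-β * Complex.I)])) := by
  constructor
  · intro h
    have hU' : U * Uᴴ = 1 := mul_eq_one_comm.mp hU
    have hV' : V * Vᴴ = 1 := mul_eq_one_comm.mp hV
    have cU00 : (starRingEnd ℂ) (U 0 0) * U 0 0 + (starRingEnd ℂ) (U 1 0) * U 1 0 = 1 := by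
      simpa [Matrix.mul_apply, Fin.sum_univ_two, Matrix.conjTranspose_apply, Matrix.one_apply]
        using congrFun (congrFun hU 0) 0
    have cU01 : (starRingEnd ℂ) (U 0 0) * U 0 1 + (starRingEnd ℂ) (U 1 0) * U 1 1 = 0 := by
      simpa [Matrix.mul_apply, Fin.sum_univ_two, Matrix.conjTranspose_apply, Matrix.one_apply]
        using congrFun (congrFun hU 0) 1
    have rU00 : U 0 0 * (starRingEnd ℂ) (U 0 0) + U 0 1 * (starRingEnd ℂ) (U 0 1) = 1 := by
      simpa [Matrix.mul_apply, Fin.sum_univ_two, Matrix.conjTranspose_apply, Matrix.one_apply]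
        using congrFun (congrFun hU' 0) 0
    have rU01 : U 0 0 * (starRingEnd ℂ) (U 1 0) + U 0 1 * (starRingEnd ℂ) (U 1 1) = 0 := by
      simpa [Matrix.mul_apply, Fin.sum_univ_two, Matrix.conjTranspose_apply, Matrix.one_apply]
        using congrFun (congrFun hU' 0) 1
    have rU11 : U 1 0 * (starRingEnd ℂ) (U 1 0) + U 1 1 * (starRingEnd ℂ) (U 1 1) = 1 := by
      simpa [Matrix.mul_apply, Fin.sum_univ_two, Matrix.conjTranspose_apply, Matrix.one_apply]
        using congrFun (congrFun hU' 1) 1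
    have cV01 : (starRingEnd ℂ) (V 0 0) * V 0 1 + (starRingEnd ℂ) (V 1 0) * V 1 1 = 0 := by
      simpa [Matrix.mul_apply, Fin.sum_univ_two, Matrix.conjTranspose_apply, Matrix.one_apply]
        using congrFun (congrFun hV 0) 1
    have rV00 : V 0 0 * (starRingEnd ℂ) (V 0 0) + V 0 1 * (starRingEnd ℂ) (V 0 1) = 1 := by
      simpa [Matrix.mul_apply, Fin.sum_univ_two, Matrix.conjTranspose_apply, Matrix.one_apply]
        using congrFun (congrFun hV' 0) 0
    have rV11 : V 1 0 * (starRingEnd ℂ) (V 1 0) + V 1 1 * (starRingEnd ℂ) (V 1 1) = 1 := by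
      simpa [Matrix.mul_apply, Fin.sum_univ_two, Matrix.conjTranspose_apply, Matrix.one_apply]
        using congrFun (congrFun hV' 1) 1
    have h0 : ‖V 0 0‖ = ‖U 0 0‖ := by
      have := h 0
      simp only [Matrix.mulVec, dotProduct, Fin.sum_univ_two, Pi.single_apply,
        star_apply] at this
      simpa using this.symm
    have h1 : ‖V 1 0‖ = ‖U 1 0‖ := by
      have := h 1
      simp only [Matrix.mulVec, dotProduct, Fin.sum_univ_two, Pi.single_apply,
        star_apply] at this
      simpa using this.symm
    obtain ⟨α, β, θ, e1, e2, e3, e4⟩ :=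
      key_s1 (U 0 0) (U 1 0) (U 0 1) (U 1 1) (V 0 0) (V 1 0) (V 0 1) (V 1 1)
        cU00 cU01 rU00 rU01 rU11 cV01 rV00 rV11 h0 h1
    refine ⟨α, β, θ, ?_⟩
    have e2' := e2; have e3' := e3; have e4' := e4
    simp only [neg_mul] at e2' e3' e4'
    ext i j
    fin_cases i <;> fin_cases j <;>
      simp only [Matrix.smul_apply, Matrix.mul_apply, Matrix.diagonal_apply,
        Fin.sum_univ_two, smul_eq_mul, Matrix.cons_val', Matrix.cons_val_zero,
        Matrix.cons_val_one, Matrix.head_cons, Matrix.empty_val', Matrix.cons_val_fin_one,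
        Fin.isValue] <;> simp
    exacts [e1, e3', e2', e4']
  · rintro ⟨α, β, θ, rfl⟩ i
    fin_cases i <;>
    simp [Matrix.mulVec, dotProduct, Fin.sum_univ_two, Pi.single_apply,
      Matrix.mul_apply, Matrix.diagonal_apply, _root_.map_mul, Complex.norm_exp]
end

section
/- Let A and B be N×N Hermitian matrices. Then e^{iA} = e^{iB} if and only if for every λ ∈ ℝ, the subspaces F^A_λ and F^B_λ of ℂ^N coincide, where F^M_λ = ⊕_{k ∈ ℤ} ker(M − (λ + 2πk)I). -/
open Matrix

/-- The "periodic eigenspace" `F^M_λ = ⨆ k ∈ ℤ, ker (M - (λ + 2πk) I)`. -/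
noncomputable def periodicEigenspace {N : ℕ} (M : Matrix (Fin N) (Fin N) ℂ) (lam : ℝ) :
    Submodule ℂ (Fin N → ℂ) :=
  ⨆ k : ℤ, LinearMap.ker (Matrix.toLin' (M - (((lam + 2 * Real.pi * k : ℝ) : ℂ)) • 1))

namespace PeriodicEigenspaceAux

open NormedSpace
open scoped Nat

variable {N : ℕ}

lemma pow_mulVec (M : Matrix (Fin N) (Fin N) ℂ) (v : Fin N → ℂ) (c : ℂ)
    (h : M *ᵥ v = c • v) : ∀ n : ℕ, (M ^ n) *ᵥ v = c ^ n • v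
  | 0 => by simp
  | n + 1 => by
    rw [pow_succ, ← mulVec_mulVec, h, mulVec_smul, pow_mulVec M v c h n, smul_smul,
      ← pow_succ']

lemma exp_mulVec (M : Matrix (Fin N) (Fin N) ℂ) (v : Fin N → ℂ) (c : ℂ)
    (h : M *ᵥ v = c • v) : exp M *ᵥ v = Complex.exp c • v := by
  letI : SeminormedRing (Matrix (Fin N) (Fin N) ℂ) := Matrix.linftyOpSemiNormedRing
  letI : NormedRing (Matrix (Fin N) (Fin N) ℂ) := Matrix.linftyOpNormedRing
  letI : NormedAlgebra ℂ (Matrix (Fin N) (Fin N) ℂ) := Matrix.linftyOpNormedAlgebra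
  let L : Matrix (Fin N) (Fin N) ℂ →ₗ[ℂ] (Fin N → ℂ) :=
    { toFun := fun X => X *ᵥ v
      map_add' := fun X Y => add_mulVec X Y v
      map_smul' := fun r X => smul_mulVec r X v }
  have hs : Summable (fun n : ℕ => (n !⁻¹ : ℂ) • M ^ n) := expSeries_summable' M
  have hc : Summable (fun n : ℕ => (n !⁻¹ : ℂ) * c ^ n) := by
    simpa [smul_eq_mul] using expSeries_summable' (𝕂 := ℂ) c
  calc exp M *ᵥ v = L.toContinuousLinearMap (∑' n : ℕ, (n !⁻¹ : ℂ) • M ^ n) := by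
        rw [exp_eq_tsum (𝕂 := ℂ)]; rfl
    _ = ∑' n : ℕ, L.toContinuousLinearMap ((n !⁻¹ : ℂ) • M ^ n) :=
        L.toContinuousLinearMap.map_tsum hs
    _ = ∑' n : ℕ, ((n !⁻¹ : ℂ) * c ^ n) • v := by
        refine tsum_congr fun n => ?_
        have : L.toContinuousLinearMap ((n !⁻¹ : ℂ) • M ^ n)
            = (n !⁻¹ : ℂ) • ((M ^ n) *ᵥ v) := by
          simp [L, LinearMap.coe_toContinuousLinearMap']
        rw [this, pow_mulVec M v c h n, smul_smul]
    _ = (∑' n : ℕ, (n !⁻¹ : ℂ) * c ^ n) • v := hc.tsum_smul_const v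
    _ = Complex.exp c • v := by
        rw [Complex.exp_eq_exp_ℂ, exp_eq_tsum (𝕂 := ℂ)]
        simp [smul_eq_mul]

lemma exists_eigenbasis (A : Matrix (Fin N) (Fin N) ℂ) (hA : A.IsHermitian) :
    ∃ (μ : Fin N → ℝ) (w : Module.Basis (Fin N) ℂ (Fin N → ℂ)),
      ∀ j, A *ᵥ w j = ((μ j : ℝ) : ℂ) • w j := by
  refine ⟨hA.eigenvalues,
    hA.eigenvectorBasis.toBasis.map (WithLp.linearEquiv 2 ℂ (Fin N → ℂ)), fun j => ?_⟩
  have h := hA.mulVec_eigenvectorBasis j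
  simp only [Module.Basis.map_apply, OrthonormalBasis.coe_toBasis, WithLp.linearEquiv_apply]
  change A *ᵥ (hA.eigenvectorBasis j).ofLp = ((hA.eigenvalues j : ℝ) : ℂ) • (hA.eigenvectorBasis j).ofLp
  rw [h, ← algebraMap_smul ℂ (hA.eigenvalues j)]
  norm_num

lemma mem_ker_iff (M : Matrix (Fin N) (Fin N) ℂ) (c : ℂ) (v : Fin N → ℂ) :
    v ∈ LinearMap.ker (Matrix.toLin' (M - c • 1)) ↔ M *ᵥ v = c • v := by
  simp [LinearMap.mem_ker, Matrix.toLin'_apply, sub_mulVec, smul_mulVec,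
    one_mulVec, sub_eq_zero]

lemma exp_eigen (A : Matrix (Fin N) (Fin N) ℂ) (v : Fin N → ℂ) (μ : ℝ)
    (hv : A *ᵥ v = ((μ : ℝ) : ℂ) • v) :
    exp (Complex.I • A) *ᵥ v = Complex.exp (Complex.I * μ) • v := by
  apply exp_mulVec
  rw [smul_mulVec, hv, smul_smul]

lemma periodic_le_ker (A : Matrix (Fin N) (Fin N) ℂ) (lam : ℝ) :
    periodicEigenspace A lam ≤
      LinearMap.ker (Matrix.toLin'
        (exp (Complex.I • A) - Complex.exp (Complex.I * lam) • 1)) := by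
  refine iSup_le fun k v hv => ?_
  rw [mem_ker_iff] at hv ⊢
  rw [exp_eigen A v _ hv]
  congr 1
  have : Complex.I * ((lam + 2 * Real.pi * (k : ℝ) : ℝ) : ℂ)
      = Complex.I * (lam : ℂ) + (k : ℤ) * (2 * (Real.pi : ℂ) * Complex.I) := by
    push_cast; ring
  rw [this, Complex.exp_add, Complex.exp_int_mul_two_pi_mul_I, mul_one]

lemma ker_eq (A : Matrix (Fin N) (Fin N) ℂ) (hA : A.IsHermitian) (lam : ℝ) :
    LinearMap.ker (Matrix.toLin'
        (exp (Complex.I • A) - Complex.exp (Complex.I * lam) • 1))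
      = periodicEigenspace A lam := by
  refine le_antisymm ?_ (periodic_le_ker A lam)
  obtain ⟨μ, w, hw⟩ := exists_eigenbasis A hA
  intro v hv
  rw [mem_ker_iff] at hv
  set e := Complex.exp (Complex.I * lam) with he
  set c : Fin N → ℂ := fun j => w.repr v j with hc
  have hrepr : ∑ j, c j • w j = v := w.sum_repr v
  have h1 : exp (Complex.I • A) *ᵥ v
      = ∑ j, (c j * Complex.exp (Complex.I * μ j)) • w j := by
    conv_lhs => rw [← hrepr]
    rw [show exp (Complex.I • A) *ᵥ (∑ j, c j • w j)
        = ∑ j, c j • (exp (Complex.I • A) *ᵥ w j) by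
      simp only [← Matrix.mulVecLin_apply, map_sum, LinearMap.map_smul]]
    refine Finset.sum_congr rfl fun j _ => ?_
    rw [exp_eigen A (w j) (μ j) (hw j), smul_smul]
  have h2 : e • v = ∑ j, (e * c j) • w j := by
    conv_lhs => rw [← hrepr]
    rw [Finset.smul_sum]
    exact Finset.sum_congr rfl fun j _ => (smul_smul e (c j) (w j))
  have hsum : ∑ j, (c j * Complex.exp (Complex.I * μ j) - e * c j) • w j = 0 := by
    simp only [sub_smul, Finset.sum_sub_distrib, ← h1, ← h2, hv, sub_self]
  have hco : ∀ j, c j * Complex.exp (Complex.I * μ j) - e * c j = 0 :=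
    Fintype.linearIndependent_iff.mp w.linearIndependent _ hsum
  rw [← hrepr]
  refine Submodule.sum_mem _ fun j _ => ?_
  by_cases hcj : c j = 0
  · simp [hcj]
  · refine Submodule.smul_mem _ _ ?_
    have h4 : c j * Complex.exp (Complex.I * (μ j : ℝ)) = c j * e := by
      have h5 := sub_eq_zero.mp (hco j)
      rw [h5, mul_comm]
    have hexp : Complex.exp (Complex.I * μ j) = e := mul_left_cancel₀ hcj h4
    rw [he, Complex.exp_eq_exp_iff_exists_int] at hexp
    obtain ⟨n, hn⟩ := hexp
    have hμ : ((μ j : ℝ) : ℂ) = ((lam + 2 * Real.pi * (n : ℝ) : ℝ) : ℂ) := by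
      have h3 : Complex.I * ((μ j : ℝ) : ℂ)
          = Complex.I * ((lam + 2 * Real.pi * (n : ℝ) : ℝ) : ℂ) := by
        rw [hn]; push_cast; ring
      exact mul_left_cancel₀ Complex.I_ne_zero h3
    refine Submodule.mem_iSup_of_mem n ?_
    rw [mem_ker_iff, hw j, hμ]

lemma top_le_iSup (A : Matrix (Fin N) (Fin N) ℂ) (hA : A.IsHermitian) :
    (⊤ : Submodule ℂ (Fin N → ℂ)) ≤ ⨆ lam : ℝ, periodicEigenspace A lam := by
  obtain ⟨μ, w, hw⟩ := exists_eigenbasis A hA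
  intro v _
  rw [← w.sum_repr v]
  refine Submodule.sum_mem _ fun j _ => Submodule.smul_mem _ _ ?_
  refine Submodule.mem_iSup_of_mem (μ j) (Submodule.mem_iSup_of_mem (0 : ℤ) ?_)
  rw [mem_ker_iff, hw j]
  norm_num

end PeriodicEigenspaceAux

open PeriodicEigenspaceAux in
theorem stmt_3 {N : ℕ} (A B : Matrix (Fin N) (Fin N) ℂ)
    (hA : Aᴴ = A) (hB : Bᴴ = B) :
    NormedSpace.exp (Complex.I • A) = NormedSpace.exp (Complex.I • B) ↔
      ∀ lam : ℝ, periodicEigenspace A lam = periodicEigenspace B lam := by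
  have hA' : A.IsHermitian := hA
  have hB' : B.IsHermitian := hB
  constructor
  · intro h lam
    rw [← ker_eq A hA' lam, ← ker_eq B hB' lam, h]
  · intro h
    have hker : (⊤ : Submodule ℂ (Fin N → ℂ)) ≤
        LinearMap.ker (Matrix.toLin' (NormedSpace.exp (Complex.I • A))
          - Matrix.toLin' (NormedSpace.exp (Complex.I • B))) := by
      refine (top_le_iSup A hA').trans (iSup_le fun lam => ?_)
      intro v hv
      have hvA : NormedSpace.exp (Complex.I • A) *ᵥ v
          = Complex.exp (Complex.I * lam) • v := by
        rw [← mem_ker_iff]; exact periodic_le_ker A lam hv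
      have hvB : NormedSpace.exp (Complex.I • B) *ᵥ v
          = Complex.exp (Complex.I * lam) • v := by
        rw [← mem_ker_iff]
        exact periodic_le_ker B lam (h lam ▸ hv)
      simp [LinearMap.mem_ker, Matrix.toLin'_apply, hvA, hvB]
    have h0 : Matrix.toLin' (NormedSpace.exp (Complex.I • A))
        - Matrix.toLin' (NormedSpace.exp (Complex.I • B)) = 0 := by
      rw [← LinearMap.ker_eq_top]
      exact top_le_iff.mp hker
    have := sub_eq_zero.mp h0
    exact Matrix.toLin'.injective this
end

section
/- Let A be an N×N Hermitian matrix and λ ∈ ℝ. Then the periodic eigenspace F^A_λ = ⊕_{k∈ℤ} ker(A − (λ+2πk)I) equals the eigenspace ker(e^{iA} − e^{iλ} I) of the unitary matrix e^{iA}. -/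
open Matrix

attribute [local instance] Matrix.linftyOpNormedRing Matrix.linftyOpNormedAlgebra

/-- If `x` is an eigenvector of `M` with eigenvalue `c`, then it is an eigenvector of
`exp M` with eigenvalue `exp c`. -/
lemma exp_mulVec_eigen {N : ℕ} (M : Matrix (Fin N) (Fin N) ℂ) (x : Fin N → ℂ) (c : ℂ)
    (h : M *ᵥ x = c • x) : NormedSpace.exp M *ᵥ x = Complex.exp c • x := by
  have hpow : ∀ n : ℕ, M ^ n *ᵥ x = c ^ n • x := by
    intro n
    induction n with
    | zero => simp
    | succ n ih =>
        rw [pow_succ, ← Matrix.mulVec_mulVec, h, Matrix.mulVec_smul, ih, pow_succ,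
          smul_smul, mul_comm]
  let L : Matrix (Fin N) (Fin N) ℂ →ₗ[ℂ] (Fin N → ℂ) :=
    { toFun := fun B => B *ᵥ x,
      map_add' := fun B C => Matrix.add_mulVec B C x,
      map_smul' := fun r B => smul_mulVec r B x }
  have hsum := (NormedSpace.expSeries_summable' (𝕂 := ℂ) M).hasSum
  have h1 : HasSum (fun n : ℕ => L (((n.factorial : ℂ))⁻¹ • M ^ n)) (L (NormedSpace.exp M)) := by
    rw [NormedSpace.exp_eq_tsum ℂ]
    exact hsum.mapL L.toContinuousLinearMap
  have h2 : HasSum (fun n : ℕ => L (((n.factorial : ℂ))⁻¹ • M ^ n)) (Complex.exp c • x) := by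
    have : ∀ n : ℕ, L (((n.factorial : ℂ))⁻¹ • M ^ n) = (((n.factorial : ℂ))⁻¹ • c ^ n) • x := by
      intro n
      simp only [L, LinearMap.coe_mk, AddHom.coe_mk, Matrix.smul_mulVec, hpow,
        smul_smul, smul_eq_mul]
    rw [funext this]
    have hc := (NormedSpace.expSeries_summable' (𝕂 := ℂ) c).hasSum
    have := hc.smul_const x
    rwa [Complex.exp_eq_exp_ℂ, NormedSpace.exp_eq_tsum ℂ]
  exact h1.unique h2

lemma real_smul_pi {N : ℕ} (r : ℝ) (v : Fin N → ℂ) : r • v = ((r : ℂ)) • v :=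
  funext fun i => by simp [Complex.real_smul]

lemma mulVec_finsum {N : ℕ} (M : Matrix (Fin N) (Fin N) ℂ) (f : Fin N → (Fin N → ℂ)) :
    M *ᵥ (∑ j, f j) = ∑ j, M *ᵥ (f j) :=
  map_sum (Matrix.mulVecLin M) f Finset.univ

theorem stmt_4 {N : ℕ} (A : Matrix (Fin N) (Fin N) ℂ) (hA : Aᴴ = A) (lam : ℝ) :
    periodicEigenspace A lam =
      LinearMap.ker (Matrix.toLin'
        (NormedSpace.exp (Complex.I • A) - Complex.exp (lam * Complex.I) • 1)) := by
  have hA' : A.IsHermitian := hA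
  set E := NormedSpace.exp (Complex.I • A) with hE
  apply le_antisymm
  · refine iSup_le fun k => ?_
    intro x hx
    set μ : ℂ := ((lam + 2 * Real.pi * k : ℝ) : ℂ) with hμ
    rw [LinearMap.mem_ker, Matrix.toLin'_apply, Matrix.sub_mulVec, Matrix.smul_mulVec,
      Matrix.one_mulVec, sub_eq_zero] at hx
    have h1 : (Complex.I • A) *ᵥ x = (Complex.I * μ) • x := by
      rw [Matrix.smul_mulVec, hx, smul_smul]
    have h2 := exp_mulVec_eigen (Complex.I • A) x (Complex.I * μ) h1
    have h3 : Complex.exp (Complex.I * μ) = Complex.exp (lam * Complex.I) := by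
      have : Complex.I * μ = lam * Complex.I + k * (2 * Real.pi * Complex.I) := by
        rw [hμ]; push_cast; ring
      rw [this, Complex.exp_add, Complex.exp_int_mul_two_pi_mul_I, mul_one]
    rw [LinearMap.mem_ker, Matrix.toLin'_apply, Matrix.sub_mulVec, Matrix.smul_mulVec,
      Matrix.one_mulVec, hE, h2, h3, sub_self]
  · intro x hx
    rw [LinearMap.mem_ker, Matrix.toLin'_apply, Matrix.sub_mulVec, Matrix.smul_mulVec,
      Matrix.one_mulVec, sub_eq_zero] at hx
    set u := hA'.eigenvectorBasis with hu
    set ev := hA'.eigenvalues with hev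
    set c : Fin N → ℂ := fun j => u.repr (WithLp.toLp 2 x) j with hc
    have hx2 : ∑ j, c j • ⇑(u j) = x := by
      have := congrArg WithLp.ofLp (u.sum_repr (WithLp.toLp 2 x))
      simpa [c, WithLp.ofLp_sum] using this
    have heig : ∀ j, A *ᵥ ⇑(u j) = ((ev j : ℝ) : ℂ) • ⇑(u j) := fun j => by
      rw [hA'.mulVec_eigenvectorBasis j, real_smul_pi]
    have hEeig : ∀ j, E *ᵥ ⇑(u j) = Complex.exp (Complex.I * ev j) • ⇑(u j) := fun j => by
      refine exp_mulVec_eigen _ _ _ ?_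
      rw [Matrix.smul_mulVec, heig j, smul_smul]
    have hExp : E *ᵥ x = ∑ j, (c j * Complex.exp (Complex.I * ev j)) • ⇑(u j) := by
      rw [← hx2, mulVec_finsum]
      refine Finset.sum_congr rfl fun j _ => ?_
      rw [Matrix.mulVec_smul, hEeig j, smul_smul]
    have hsmul : Complex.exp (lam * Complex.I) • x
        = ∑ j, (Complex.exp (lam * Complex.I) * c j) • ⇑(u j) := by
      rw [← hx2, Finset.smul_sum]
      exact Finset.sum_congr rfl fun j _ => smul_smul _ _ _
    have h0 : ∑ j, (c j * Complex.exp (Complex.I * ev j)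
        - Complex.exp (lam * Complex.I) * c j) • ⇑(u j) = 0 := by
      simp only [sub_smul, Finset.sum_sub_distrib]
      rw [← hExp, ← hsmul, hx, sub_self]
    have hli := u.orthonormal.linearIndependent
    rw [Fintype.linearIndependent_iff] at hli
    have hcoef : ∀ j, c j * Complex.exp (Complex.I * ev j)
        = Complex.exp (lam * Complex.I) * c j := fun j =>
      sub_eq_zero.mp (hli (fun j => c j * Complex.exp (Complex.I * ev j)
          - Complex.exp (lam * Complex.I) * c j)
        (WithLp.ofLp_injective 2 (by simpa [WithLp.ofLp_sum] using h0)) j)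
    rw [← hx2]
    refine Submodule.sum_mem _ fun j _ => ?_
    by_cases hcj : c j = 0
    · simp [hcj]
    · have hexpeq : Complex.exp (Complex.I * ev j) = Complex.exp (lam * Complex.I) :=
        mul_left_cancel₀ hcj (by rw [hcoef j, mul_comm (Complex.exp _) (c j)])
      rw [Complex.exp_eq_exp_iff_exists_int] at hexpeq
      obtain ⟨n, hn⟩ := hexpeq
      have hev_eq : ((ev j : ℝ) : ℂ) = ((lam + 2 * Real.pi * n : ℝ) : ℂ) := by
        have h4 : Complex.I * ((ev j : ℝ) : ℂ) = Complex.I * ((lam + 2 * Real.pi * n : ℝ) : ℂ) := by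
          rw [hn]; push_cast; ring
        exact mul_left_cancel₀ Complex.I_ne_zero h4
      refine Submodule.mem_iSup_of_mem n ?_
      rw [LinearMap.mem_ker, LinearMap.map_smul, Matrix.toLin'_apply, Matrix.sub_mulVec,
        Matrix.smul_mulVec, Matrix.one_mulVec, heig j, hev_eq, sub_self, smul_zero]
end

section
/- Let N ≥ 2 and suppose the pair of sets 𝓘 = unit sphere of ℂ^N and 𝓕 = unit sphere of ℂ^N. If U, V are unitary N×N matrices with |a* U b| = |a* V b| for all a ∈ 𝓕 and b ∈ 𝓘, and additionally det U = det V = 1 (both special unitary) and ‖U − I‖ and ‖V − I‖ are both strictly smaller than the distance from 1 to any other N-th root of unity in ℂ times 1/2 (i.e., both sufficiently close to the identity), then U = V. -/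
open Matrix
open scoped Matrix.Norms.L2Operator


private lemma aux_eq_of_abs_add (z w : ℂ) (hz : ‖z‖ = 1) (hw : ‖w‖ = 1)
    (hsum : ‖z + w‖ = 2) : z = w := by
  have h1 : Complex.normSq (z + w) = 4 := by
    rw [← Complex.sq_norm, hsum]; norm_num
  have hz2 : Complex.normSq z = 1 := by rw [← Complex.sq_norm, hz]; norm_num
  have hw2 : Complex.normSq w = 1 := by rw [← Complex.sq_norm, hw]; norm_num
  rw [Complex.normSq_add, hz2, hw2] at h1
  set t : ℂ := z * (starRingEnd ℂ) w with ht
  have hre : t.re = 1 := by linarith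
  have habs : ‖t‖ = 1 := by
    rw [ht, norm_mul, Complex.norm_conj, hz, hw, mul_one]
  have hsq : t.re * t.re + t.im * t.im = 1 := by
    have hts : Complex.normSq t = 1 := by rw [← Complex.sq_norm, habs]; norm_num
    simpa [Complex.normSq_apply] using hts
  have him : t.im = 0 := by nlinarith
  have ht1 : t = 1 := Complex.ext (by simp [hre]) (by simp [him])
  have hww : (starRingEnd ℂ) w * w = 1 := by
    rw [mul_comm, Complex.mul_conj, hw2]; norm_num
  calc z = z * ((starRingEnd ℂ) w * w) := by rw [hww, mul_one]
    _ = t * w := by rw [ht]; ring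
    _ = w := by rw [ht1, one_mul]

private lemma aux_abs_exp (θ : ℝ) :
    ‖Complex.exp (θ * Complex.I) - 1‖ = Real.sqrt (2 - 2 * Real.cos θ) := by
  rw [Complex.exp_mul_I]
  have : (Complex.cos θ + Complex.sin θ * Complex.I - 1) =
      Complex.mk (Real.cos θ - 1) (Real.sin θ) := by
    apply Complex.ext <;> simp [Complex.cos_ofReal_re, Complex.sin_ofReal_re]
  rw [this, Complex.norm_def, Complex.normSq_mk]
  congr 1
  have := Real.sin_sq_add_cos_sq θ
  ring_nf
  nlinarith [Real.sin_sq_add_cos_sq θ]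

private lemma aux_root {N : ℕ} (hN : 2 ≤ N) (lam : ℂ) (hpow : lam ^ N = 1)
    (hclose : ‖lam - 1‖ <
      ‖Complex.exp (2 * Real.pi * Complex.I / N) - 1‖) : lam = 1 := by
  have hN0 : (N : ℝ) ≠ 0 := by positivity
  have hNpos : (0:ℝ) < N := by positivity
  haveI : NeZero N := ⟨by omega⟩
  obtain ⟨k, hkN, rfl⟩ :=
    (Complex.isPrimitiveRoot_exp N (by omega)).eq_pow_of_pow_eq_one hpow
  set θ : ℝ := 2 * Real.pi / N with hθ
  have hθpos : 0 < θ := by positivity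
  have hθπ : θ ≤ Real.pi := by
    rw [hθ, div_le_iff₀ hNpos]
    nlinarith [Real.pi_pos,
      mul_le_mul_of_nonneg_left (show (2:ℝ) ≤ N by exact_mod_cast hN) Real.pi_pos.le]
  have hcast : (2 * Real.pi * Complex.I / N : ℂ) = (θ : ℂ) * Complex.I := by
    rw [hθ]; push_cast; ring
  by_cases hk0 : k = 0
  · simp [hk0]
  have hk1 : 1 ≤ k := Nat.one_le_iff_ne_zero.mpr hk0
  exfalso
  have hexpk : Complex.exp (2 * Real.pi * Complex.I / N) ^ k =
      Complex.exp (((k : ℝ) * θ : ℝ) * Complex.I) := by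
    rw [← Complex.exp_nat_mul, hcast]; push_cast; ring_nf
  rw [hexpk, aux_abs_exp, hcast, aux_abs_exp] at hclose
  have hcos : Real.cos ((k : ℝ) * θ) ≤ Real.cos θ := by
    have hx1 : θ ≤ (k : ℝ) * θ := by
      nlinarith [(by exact_mod_cast hk1 : (1:ℝ) ≤ (k:ℝ))]
    have hx2 : (k : ℝ) * θ ≤ 2 * Real.pi - θ := by
      have hNθ : (N : ℝ) * θ = 2 * Real.pi := by
        rw [hθ]; field_simp
      have : (k : ℝ) ≤ (N : ℝ) - 1 := by
        have : (k : ℝ) + 1 ≤ N := by exact_mod_cast hkN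
        linarith
      nlinarith
    rcases le_or_gt ((k : ℝ) * θ) Real.pi with hle | hgt
    · exact Real.cos_le_cos_of_nonneg_of_le_pi hθpos.le hle hx1
    · have h2 : Real.cos ((k : ℝ) * θ) = Real.cos (2 * Real.pi - (k : ℝ) * θ) := by
        rw [Real.cos_sub, Real.cos_two_pi, Real.sin_two_pi]; ring
      rw [h2]
      exact Real.cos_le_cos_of_nonneg_of_le_pi hθpos.le (by linarith) (by linarith)
  have : Real.sqrt (2 - 2 * Real.cos θ) ≤ Real.sqrt (2 - 2 * Real.cos ((k:ℝ) * θ)) :=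
    Real.sqrt_le_sqrt (by linarith)
  linarith

/-- Two special unitary matrices close to the identity (in operator norm) giving the same
ideal data are equal. -/
theorem stmt_15 {N : ℕ} (hN : 2 ≤ N) (U V : Matrix (Fin N) (Fin N) ℂ)
    (hU : Uᴴ * U = 1) (hV : Vᴴ * V = 1)
    (hdetU : U.det = 1) (hdetV : V.det = 1)
    (h : ∀ a b : Fin N → ℂ, star a ⬝ᵥ a = 1 → star b ⬝ᵥ b = 1 →
      ‖star a ⬝ᵥ U.mulVec b‖ = ‖star a ⬝ᵥ V.mulVec b‖)
    (hUclose : ‖U - 1‖ < ‖Complex.exp (2 * Real.pi * Complex.I / N) - 1‖ / 2)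
    (hVclose : ‖V - 1‖ < ‖Complex.exp (2 * Real.pi * Complex.I / N) - 1‖ / 2) :
    U = V := by
  haveI : NeZero N := ⟨by omega⟩
  have hUinv : U * Uᴴ = 1 := mul_eq_one_comm.mp hU
  set W : Matrix (Fin N) (Fin N) ℂ := V * Uᴴ with hWdef
  -- key identity
  have key : ∀ a c : Fin N → ℂ, star a ⬝ᵥ a = 1 → star c ⬝ᵥ c = 1 →
      ‖star a ⬝ᵥ c‖ = ‖star a ⬝ᵥ W.mulVec c‖ := by
    intro a c ha hc
    have hb : star (Uᴴ.mulVec c) ⬝ᵥ (Uᴴ.mulVec c) = 1 := by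
      rw [star_mulVec, conjTranspose_conjTranspose, ← dotProduct_mulVec,
        mulVec_mulVec, hUinv, one_mulVec]
      exact hc
    have := h a (Uᴴ.mulVec c) ha hb
    rwa [mulVec_mulVec, hUinv, one_mulVec, mulVec_mulVec, ← hWdef] at this
  -- standard basis vectors are unit
  have eunit : ∀ i : Fin N, star (Pi.single i 1 : Fin N → ℂ) ⬝ᵥ Pi.single i 1 = 1 := by
    intro i
    have : star (Pi.single i 1 : Fin N → ℂ) = Pi.single i 1 := by
      funext k
      by_cases hk : k = i <;> simp [Pi.single_apply, hk]
    rw [this, dotProduct_single]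
    simp
  -- entries of W
  have hentry : ∀ i j : Fin N, ‖W i j‖ = if i = j then 1 else 0 := by
    intro i j
    have := key (Pi.single i 1) (Pi.single j 1) (eunit i) (eunit j)
    have hst : star (Pi.single i 1 : Fin N → ℂ) = Pi.single i 1 := by
      funext k; by_cases hk : k = i <;> simp [Pi.single_apply, hk]
    rw [hst, single_dotProduct, one_mul, single_dotProduct, one_mul, mulVec_single,
      Pi.single_apply] at this
    simp only [Pi.smul_apply, op_smul_eq_mul, mul_one, Matrix.col_apply] at this
    rw [← this]
    by_cases hij : i = j <;> simp [hij]
  have hstar_single : ∀ i : Fin N, star (Pi.single i 1 : Fin N → ℂ) = Pi.single i 1 := by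
    intro i; funext k; by_cases hk : k = i <;> simp [Pi.single_apply, hk]
  have hoff : ∀ i j : Fin N, i ≠ j → W i j = 0 := by
    intro i j hij
    have := hentry i j
    rw [if_neg hij] at this
    exact norm_eq_zero.mp this
  have hdiagabs : ∀ i : Fin N, ‖W i i‖ = 1 := by
    intro i; simpa using hentry i i
  -- diagonal entries are all equal
  have hdiag : ∀ i j : Fin N, W i i = W j j := by
    intro i j
    by_cases hij : i = j
    · rw [hij]
    set r : ℂ := ((Real.sqrt 2 : ℝ) : ℂ)⁻¹ with hr
    set v : Fin N → ℂ := Pi.single i 1 + Pi.single j 1 with hv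
    have hrr : r * r = (2 : ℂ)⁻¹ := by
      rw [hr, ← mul_inv, ← Complex.ofReal_mul, Real.mul_self_sqrt (by norm_num)]
      norm_num
    have hstaru : star (r • v) = r • v := by
      rw [star_smul, hv, star_add, hstar_single, hstar_single]
      congr 1
      simp [hr]
    have hvv : v ⬝ᵥ v = 2 := by
      simp [hv, add_dotProduct, single_dotProduct, Pi.add_apply, Pi.single_apply, hij,
        Ne.symm hij]
      norm_num
    have hunit : star (r • v) ⬝ᵥ (r • v) = 1 := by
      rw [hstaru, smul_dotProduct, dotProduct_smul, hvv, smul_eq_mul, smul_eq_mul,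
        ← mul_assoc, hrr]
      norm_num
    have hWv : star (r • v) ⬝ᵥ W.mulVec (r • v) = (2:ℂ)⁻¹ * (W i i + W j j) := by
      rw [hstaru, mulVec_smul, smul_dotProduct, dotProduct_smul, smul_eq_mul, smul_eq_mul,
        ← mul_assoc, hrr]
      congr 1
      simp [hv, mulVec_add, mulVec_single, add_dotProduct, single_dotProduct, Pi.add_apply,
        hoff i j hij, hoff j i (Ne.symm hij)]
    have hk := key (r • v) (r • v) hunit hunit
    rw [hunit, hWv, norm_one, norm_mul] at hk
    have habs2 : ‖W i i + W j j‖ = 2 := by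
      have : ‖(2:ℂ)⁻¹‖ = 2⁻¹ := by simp
      rw [this] at hk
      field_simp at hk
      linarith [hk]
    exact aux_eq_of_abs_add _ _ (hdiagabs i) (hdiagabs j) habs2
  -- W is a scalar multiple of the identity
  set i0 : Fin N := ⟨0, by omega⟩ with hi0
  set lam : ℂ := W i0 i0 with hlam
  have hWscal : W = lam • (1 : Matrix (Fin N) (Fin N) ℂ) := by
    funext i j
    by_cases hij : i = j
    · subst hij
      rw [hdiag i i0]
      simp [Matrix.smul_apply, Matrix.one_apply, hlam]
    · rw [hoff i j hij]
      simp [Matrix.smul_apply, Matrix.one_apply, hij]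
  have hVU : V = lam • U := by
    have : W * U = V := by
      rw [hWdef, Matrix.mul_assoc, hU, Matrix.mul_one]
    rw [← this, hWscal, Matrix.smul_mul, Matrix.one_mul]
  -- determinant forces lam ^ N = 1
  have hpow : lam ^ N = 1 := by
    have := hdetV
    rw [hVU, Matrix.det_smul, hdetU, mul_one, Fintype.card_fin] at this
    exact this
  -- norm of U is 1
  haveI : Nontrivial (Matrix (Fin N) (Fin N) ℂ) := by
    haveI : Nonempty (Fin N) := ⟨i0⟩
    infer_instance
  have hUmem : U ∈ unitary (Matrix (Fin N) (Fin N) ℂ) := by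
    rw [Unitary.mem_iff]
    constructor
    · rw [Matrix.star_eq_conjTranspose]; exact hU
    · rw [Matrix.star_eq_conjTranspose]; exact hUinv
  have hnormU : ‖U‖ = 1 := CStarRing.norm_of_mem_unitary hUmem
  have hVUnorm : ‖V - U‖ = ‖lam - 1‖ := by
    have : V - U = (lam - 1) • U := by
      rw [hVU, sub_smul, one_smul]
    rw [this, norm_smul, hnormU, mul_one]
  have htri : ‖lam - 1‖ <
      ‖Complex.exp (2 * Real.pi * Complex.I / N) - 1‖ := by
    rw [← hVUnorm]
    calc ‖V - U‖ ≤ ‖V - 1‖ + ‖(1 : Matrix (Fin N) (Fin N) ℂ) - U‖ := by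
          simpa using norm_sub_le_norm_sub_add_norm_sub V 1 U
      _ = ‖V - 1‖ + ‖U - 1‖ := by rw [norm_sub_rev (1 : Matrix (Fin N) (Fin N) ℂ) U]
      _ < _ := by linarith
  have hlam1 : lam = 1 := aux_root hN lam hpow htri
  rw [hVU, hlam1, one_smul]
end
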